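/- Let $n_1, n_2 > 3/2$ and set $n_3 = \min\{n_1, n_2\}$. There is a constant $C > 0$ such that for all $t \geq 0$ and $x \in \mathbb{R}^3$: $\int_{\mathbb{R}^3}\big(1+\tfrac{|x-y|^2}{1+t}\big)^{-n_1}\,(1+|y|^2)^{-n_2}\,dy \leq C\big(1+\tfrac{|x|^2}{1+t}\big)^{-n_3}$. -/

import Mathlib

set_option maxHeartbeats 1000000

open MeasureTheory Real

local notation "E3" => EuclideanSpace ℝ (Fin 3)

lemma aux_integrable {n : ℝ} (hn : 3 / 2 < n) :
    Integrable (fun y : E3 => (1 + ‖y‖ ^ 2) ^ (-n)) := by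
  have h := integrable_rpow_neg_one_add_norm_sq (E := E3) (μ := volume) (r := 2 * n)
    (by rw [finrank_euclideanSpace_fin]; push_cast; linarith)
  have : -n = -(2 * n) / 2 := by ring
  rw [this]
  exact h

lemma aux_scale {n : ℝ} {s : ℝ} (hs : 0 < s) (x : E3) :
    (∫ y : E3, (1 + ‖x - y‖ ^ 2 / s) ^ (-n))
      = s ^ (3 / 2 : ℝ) * ∫ y : E3, (1 + ‖y‖ ^ 2) ^ (-n) := by
  have h1 : (∫ y : E3, (1 + ‖x - y‖ ^ 2 / s) ^ (-n))
      = ∫ y : E3, (1 + ‖y‖ ^ 2 / s) ^ (-n) :=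
    integral_sub_left_eq_self (fun z : E3 => (1 + ‖z‖ ^ 2 / s) ^ (-n)) volume x
  have h2 : ∀ y : E3, (1 + ‖y‖ ^ 2 / s) ^ (-n)
      = (fun z : E3 => (1 + ‖z‖ ^ 2) ^ (-n)) ((Real.sqrt s)⁻¹ • y) := by
    intro y
    simp only [norm_smul, norm_inv, Real.norm_eq_abs, abs_of_nonneg (Real.sqrt_nonneg s),
      mul_pow, inv_pow, Real.sq_sqrt hs.le]
    rw [div_eq_inv_mul]
  rw [h1]
  simp_rw [h2]
  rw [MeasureTheory.Measure.integral_comp_inv_smul_of_nonneg (volume : Measure E3)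
    (fun z : E3 => (1 + ‖z‖ ^ 2) ^ (-n)) (Real.sqrt_nonneg s), finrank_euclideanSpace_fin,
    smul_eq_mul]
  congr 1
  rw [Real.sqrt_eq_rpow, ← Real.rpow_natCast (s ^ (1/2 : ℝ)) 3, ← Real.rpow_mul hs.le]
  norm_num

lemma aux_integrable_shift {n : ℝ} (hn : 3 / 2 < n) {s : ℝ} (hs : 0 < s) (x : E3) :
    Integrable (fun y : E3 => (1 + ‖x - y‖ ^ 2 / s) ^ (-n)) := by
  have h2 : ∀ y : E3, (1 + ‖y‖ ^ 2 / s) ^ (-n)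
      = (fun z : E3 => (1 + ‖z‖ ^ 2) ^ (-n)) ((Real.sqrt s)⁻¹ • y) := by
    intro y
    simp only [norm_smul, norm_inv, Real.norm_eq_abs, abs_of_nonneg (Real.sqrt_nonneg s),
      mul_pow, inv_pow, Real.sq_sqrt hs.le]
    rw [div_eq_inv_mul]
  have hg : Integrable (fun y : E3 => (1 + ‖y‖ ^ 2 / s) ^ (-n)) := by
    simp_rw [h2]
    exact ((MeasureTheory.integrable_comp_smul_iff (volume : Measure E3)
      (fun z : E3 => (1 + ‖z‖ ^ 2) ^ (-n)) (by positivity : (Real.sqrt s)⁻¹ ≠ 0)).2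
      (aux_integrable hn))
  exact hg.comp_sub_left x

theorem stmt_10 (n₁ n₂ : ℝ) (h₁ : 3 / 2 < n₁) (h₂ : 3 / 2 < n₂) :
    ∃ C > 0, ∀ (t : ℝ), 0 ≤ t → ∀ x : EuclideanSpace ℝ (Fin 3),
      (∫ y : EuclideanSpace ℝ (Fin 3),
          (1 + ‖x - y‖ ^ 2 / (1 + t)) ^ (-n₁) * (1 + ‖y‖ ^ 2) ^ (-n₂))
        ≤ C * (1 + ‖x‖ ^ 2 / (1 + t)) ^ (-(min n₁ n₂)) := by
  set n₃ : ℝ := min n₁ n₂ with hn₃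
  have hn₃pos : (3 / 2 : ℝ) < n₃ := lt_min h₁ h₂
  set K₁ : ℝ := ∫ y : E3, (1 + ‖y‖ ^ 2) ^ (-n₁) with hK₁
  set K₂ : ℝ := ∫ y : E3, (1 + ‖y‖ ^ 2) ^ (-n₂) with hK₂
  have hK₁nn : 0 ≤ K₁ := integral_nonneg fun y => by positivity
  have hK₂nn : 0 ≤ K₂ := integral_nonneg fun y => by positivity
  refine ⟨(2 : ℝ) ^ n₃ * K₂ + (4 : ℝ) ^ n₁ * K₂ + (2 : ℝ) ^ n₃ * (4 : ℝ) ^ n₂ * K₁ + 1,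
    by positivity, ?_⟩
  intro t ht x
  set s : ℝ := 1 + t with hsdef
  have hs1 : (1 : ℝ) ≤ s := by linarith
  have hs0 : (0 : ℝ) < s := by linarith
  set A : ℝ := 1 + ‖x‖ ^ 2 / s with hA
  have hA1 : (1 : ℝ) ≤ A := by
    rw [hA]
    exact le_add_of_nonneg_right (by positivity)
  have hA0 : (0 : ℝ) < A := by linarith
  have hAneg : (0 : ℝ) < A ^ (-n₃) := Real.rpow_pos_of_pos hA0 _
  -- integrability of the integrand
  have hF : Integrable (fun y : E3 =>
      (1 + ‖x - y‖ ^ 2 / s) ^ (-n₁) * (1 + ‖y‖ ^ 2) ^ (-n₂)) := by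
    refine (aux_integrable h₂).mono' ?_ (Filter.Eventually.of_forall fun y => ?_)
    · apply Measurable.aestronglyMeasurable
      fun_prop
    · have h1 : (1 + ‖x - y‖ ^ 2 / s) ^ (-n₁) ≤ 1 :=
        Real.rpow_le_one_of_one_le_of_nonpos (le_add_of_nonneg_right (by positivity)) (by linarith)
      have h2 : (0 : ℝ) ≤ (1 + ‖y‖ ^ 2) ^ (-n₂) := by positivity
      rw [Real.norm_eq_abs, abs_of_nonneg (by positivity)]
      nlinarith [Real.rpow_nonneg (by positivity : (0:ℝ) ≤ 1 + ‖x - y‖ ^ 2 / s) (-n₁)]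
  have hFnn : ∀ y : E3, 0 ≤ (1 + ‖x - y‖ ^ 2 / s) ^ (-n₁) * (1 + ‖y‖ ^ 2) ^ (-n₂) :=
    fun y => by positivity
  rcases le_or_gt (‖x‖ ^ 2) s with hcase | hcase
  · -- Case A : ‖x‖² ≤ s, so A ≤ 2
    have hA2 : A ≤ 2 := by
      have : ‖x‖ ^ 2 / s ≤ 1 := (div_le_one hs0).2 hcase
      simp only [hA]; linarith
    have hIK : (∫ y : E3, (1 + ‖x - y‖ ^ 2 / s) ^ (-n₁) * (1 + ‖y‖ ^ 2) ^ (-n₂)) ≤ K₂ := by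
      refine integral_mono hF (aux_integrable h₂) fun y => ?_
      have h1 : (1 + ‖x - y‖ ^ 2 / s) ^ (-n₁) ≤ 1 :=
        Real.rpow_le_one_of_one_le_of_nonpos (le_add_of_nonneg_right (by positivity)) (by linarith)
      have h2 : (0 : ℝ) ≤ (1 + ‖y‖ ^ 2) ^ (-n₂) := by positivity
      nlinarith
    have h2A : (2 : ℝ) ^ (-n₃) ≤ A ^ (-n₃) :=
      Real.rpow_le_rpow_of_nonpos hA0 hA2 (by linarith)
    have hC : K₂ ≤ ((2 : ℝ) ^ n₃ * K₂) * A ^ (-n₃) := by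
      calc K₂ = ((2 : ℝ) ^ n₃ * K₂) * (2 : ℝ) ^ (-n₃) := by
              rw [mul_comm ((2:ℝ)^n₃) K₂, mul_assoc, ← Real.rpow_add (by norm_num)]
              simp
        _ ≤ ((2 : ℝ) ^ n₃ * K₂) * A ^ (-n₃) := by
              have : (0:ℝ) ≤ (2 : ℝ) ^ n₃ * K₂ := by positivity
              exact mul_le_mul_of_nonneg_left h2A this
    have hCC : ((2 : ℝ) ^ n₃ * K₂) * A ^ (-n₃)
        ≤ ((2 : ℝ) ^ n₃ * K₂ + (4 : ℝ) ^ n₁ * K₂ + (2 : ℝ) ^ n₃ * (4 : ℝ) ^ n₂ * K₁ + 1)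
          * A ^ (-n₃) := by
      have : (0:ℝ) ≤ (4 : ℝ) ^ n₁ * K₂ + (2 : ℝ) ^ n₃ * (4 : ℝ) ^ n₂ * K₁ + 1 := by positivity
      nlinarith
    exact hIK.trans (hC.trans hCC)
  · -- Case B : s < ‖x‖²
    have hSmeas : MeasurableSet {y : E3 | ‖y‖ ≤ ‖x‖ / 2} := by
      have : {y : E3 | ‖y‖ ≤ ‖x‖ / 2} = Metric.closedBall 0 (‖x‖ / 2) := by
        ext y; simp [Metric.mem_closedBall, dist_zero_right]
      rw [this]; exact measurableSet_closedBall
    set S := {y : E3 | ‖y‖ ≤ ‖x‖ / 2} with hSdef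
    have hsplit : (∫ y : E3, (1 + ‖x - y‖ ^ 2 / s) ^ (-n₁) * (1 + ‖y‖ ^ 2) ^ (-n₂))
        = (∫ y in S, (1 + ‖x - y‖ ^ 2 / s) ^ (-n₁) * (1 + ‖y‖ ^ 2) ^ (-n₂))
          + ∫ y in Sᶜ, (1 + ‖x - y‖ ^ 2 / s) ^ (-n₁) * (1 + ‖y‖ ^ 2) ^ (-n₂) :=
      (integral_add_compl hSmeas hF).symm
    -- bound on S
    have hIS : (∫ y in S, (1 + ‖x - y‖ ^ 2 / s) ^ (-n₁) * (1 + ‖y‖ ^ 2) ^ (-n₂))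
        ≤ (4 : ℝ) ^ n₁ * A ^ (-n₃) * K₂ := by
      have hmono : ∀ y ∈ S, (1 + ‖x - y‖ ^ 2 / s) ^ (-n₁) * (1 + ‖y‖ ^ 2) ^ (-n₂)
          ≤ ((4 : ℝ) ^ n₁ * A ^ (-n₃)) * (1 + ‖y‖ ^ 2) ^ (-n₂) := by
        intro y hy
        have hy' : ‖y‖ ≤ ‖x‖ / 2 := hy
        have hxy : ‖x‖ / 2 ≤ ‖x - y‖ := by
          have := norm_sub_norm_le x y
          have := norm_sub_rev x y
          calc ‖x‖ / 2 = ‖x‖ - ‖x‖ / 2 := by ring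
            _ ≤ ‖x‖ - ‖y‖ := by linarith
            _ ≤ ‖x - y‖ := norm_sub_norm_le x y
        have hbase : A / 4 ≤ 1 + ‖x - y‖ ^ 2 / s := by
          have h1 : (‖x‖ / 2) ^ 2 ≤ ‖x - y‖ ^ 2 := by
            have h0 : (0:ℝ) ≤ ‖x‖ / 2 := by positivity
            nlinarith
          have h2 : ‖x‖ ^ 2 / (4 * s) ≤ ‖x - y‖ ^ 2 / s := by
            rw [div_le_div_iff₀ (by positivity) hs0]
            nlinarith
          have : A / 4 ≤ 1 + ‖x‖ ^ 2 / (4 * s) := by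
            simp only [hA]
            rw [div_le_iff₀ (by norm_num : (0:ℝ) < 4)]
            have : ‖x‖ ^ 2 / (4 * s) * 4 = ‖x‖ ^ 2 / s := by
              field_simp
            rw [add_mul, this]
            linarith
          linarith
        have hfac : (1 + ‖x - y‖ ^ 2 / s) ^ (-n₁) ≤ (4 : ℝ) ^ n₁ * A ^ (-n₃) := by
          have e1 : (1 + ‖x - y‖ ^ 2 / s) ^ (-n₁) ≤ (A / 4) ^ (-n₁) :=
            Real.rpow_le_rpow_of_nonpos (by positivity) hbase (by linarith)
          have e2 : (A / 4) ^ (-n₁) = (4 : ℝ) ^ n₁ * A ^ (-n₁) := by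
            rw [Real.div_rpow hA0.le (by norm_num), Real.rpow_neg (by norm_num : (0:ℝ) ≤ 4)]
            field_simp
          have e3 : A ^ (-n₁) ≤ A ^ (-n₃) := by
            apply Real.rpow_le_rpow_of_exponent_le hA1
            have : n₃ ≤ n₁ := min_le_left _ _
            linarith
          calc (1 + ‖x - y‖ ^ 2 / s) ^ (-n₁) ≤ (A / 4) ^ (-n₁) := e1
            _ = (4 : ℝ) ^ n₁ * A ^ (-n₁) := e2
            _ ≤ (4 : ℝ) ^ n₁ * A ^ (-n₃) := by
                have : (0:ℝ) ≤ (4:ℝ) ^ n₁ := by positivity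
                exact mul_le_mul_of_nonneg_left e3 this
        have hnn : (0:ℝ) ≤ (1 + ‖y‖ ^ 2) ^ (-n₂) := by positivity
        exact mul_le_mul_of_nonneg_right hfac hnn
      calc (∫ y in S, (1 + ‖x - y‖ ^ 2 / s) ^ (-n₁) * (1 + ‖y‖ ^ 2) ^ (-n₂))
          ≤ ∫ y in S, ((4 : ℝ) ^ n₁ * A ^ (-n₃)) * (1 + ‖y‖ ^ 2) ^ (-n₂) := by
            refine setIntegral_mono_on hF.integrableOn
              (((aux_integrable h₂).const_mul _).integrableOn) hSmeas hmono
        _ = ((4 : ℝ) ^ n₁ * A ^ (-n₃)) * ∫ y in S, (1 + ‖y‖ ^ 2) ^ (-n₂) := by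
            rw [integral_const_mul]
        _ ≤ ((4 : ℝ) ^ n₁ * A ^ (-n₃)) * K₂ := by
            have hle : (∫ y in S, (1 + ‖y‖ ^ 2) ^ (-n₂)) ≤ K₂ :=
              setIntegral_le_integral (aux_integrable h₂)
                (Filter.Eventually.of_forall fun y => by positivity)
            have : (0:ℝ) ≤ (4 : ℝ) ^ n₁ * A ^ (-n₃) := by positivity
            exact mul_le_mul_of_nonneg_left hle this
        _ = (4 : ℝ) ^ n₁ * A ^ (-n₃) * K₂ := rfl
    -- bound on Sᶜ
    have hISc : (∫ y in Sᶜ, (1 + ‖x - y‖ ^ 2 / s) ^ (-n₁) * (1 + ‖y‖ ^ 2) ^ (-n₂))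
        ≤ (2 : ℝ) ^ n₃ * (4 : ℝ) ^ n₂ * K₁ * A ^ (-n₃) := by
      set c : ℝ := (4 : ℝ) ^ n₂ * (1 + ‖x‖ ^ 2) ^ (-n₂) with hc
      have hcnn : (0:ℝ) ≤ c := by positivity
      have hmono : ∀ y ∈ Sᶜ, (1 + ‖x - y‖ ^ 2 / s) ^ (-n₁) * (1 + ‖y‖ ^ 2) ^ (-n₂)
          ≤ c * (1 + ‖x - y‖ ^ 2 / s) ^ (-n₁) := by
        intro y hy
        have hy' : ‖x‖ / 2 < ‖y‖ := by
          simp only [hSdef, Set.mem_compl_iff, Set.mem_setOf_eq, not_le] at hy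
          exact hy
        have hbase : (1 + ‖x‖ ^ 2) / 4 ≤ 1 + ‖y‖ ^ 2 := by
          have h1 : (‖x‖ / 2) ^ 2 ≤ ‖y‖ ^ 2 := by
            have h0 : (0:ℝ) ≤ ‖x‖ / 2 := by positivity
            nlinarith
          have : ‖x‖ ^ 2 / 4 ≤ ‖y‖ ^ 2 := by nlinarith
          linarith
        have hfac : (1 + ‖y‖ ^ 2) ^ (-n₂) ≤ c := by
          have e1 : (1 + ‖y‖ ^ 2) ^ (-n₂) ≤ ((1 + ‖x‖ ^ 2) / 4) ^ (-n₂) :=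
            Real.rpow_le_rpow_of_nonpos (by positivity) hbase (by linarith)
          have e2 : ((1 + ‖x‖ ^ 2) / 4) ^ (-n₂) = c := by
            rw [hc, Real.div_rpow (by positivity) (by norm_num),
              Real.rpow_neg (by norm_num : (0:ℝ) ≤ 4),
              Real.rpow_neg (by positivity : (0:ℝ) ≤ 1 + ‖x‖ ^ 2)]
            field_simp
          exact e1.trans_eq e2
        have hnn : (0:ℝ) ≤ (1 + ‖x - y‖ ^ 2 / s) ^ (-n₁) := by positivity
        calc (1 + ‖x - y‖ ^ 2 / s) ^ (-n₁) * (1 + ‖y‖ ^ 2) ^ (-n₂)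
            ≤ (1 + ‖x - y‖ ^ 2 / s) ^ (-n₁) * c := mul_le_mul_of_nonneg_left hfac hnn
          _ = c * (1 + ‖x - y‖ ^ 2 / s) ^ (-n₁) := mul_comm _ _
      have hint : (∫ y in Sᶜ, (1 + ‖x - y‖ ^ 2 / s) ^ (-n₁) * (1 + ‖y‖ ^ 2) ^ (-n₂))
          ≤ c * (s ^ (3/2 : ℝ) * K₁) := by
        calc (∫ y in Sᶜ, (1 + ‖x - y‖ ^ 2 / s) ^ (-n₁) * (1 + ‖y‖ ^ 2) ^ (-n₂))
            ≤ ∫ y in Sᶜ, c * (1 + ‖x - y‖ ^ 2 / s) ^ (-n₁) := by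
              refine setIntegral_mono_on hF.integrableOn
                (((aux_integrable_shift h₁ hs0 x).const_mul _).integrableOn)
                hSmeas.compl hmono
          _ = c * ∫ y in Sᶜ, (1 + ‖x - y‖ ^ 2 / s) ^ (-n₁) := integral_const_mul _ _
          _ ≤ c * ∫ y : E3, (1 + ‖x - y‖ ^ 2 / s) ^ (-n₁) := by
              refine mul_le_mul_of_nonneg_left ?_ hcnn
              exact setIntegral_le_integral (aux_integrable_shift h₁ hs0 x)
                (Filter.Eventually.of_forall fun y => by positivity)
          _ = c * (s ^ (3/2 : ℝ) * K₁) := by rw [aux_scale hs0 x]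
      refine hint.trans ?_
      -- key : c * s^{3/2} ≤ 2^{n₃} * 4^{n₂} * A^{-n₃}
      have hX1 : (1:ℝ) ≤ 1 + ‖x‖ ^ 2 := le_add_of_nonneg_right (by positivity)
      have hX0 : (0:ℝ) < 1 + ‖x‖ ^ 2 := by positivity
      have key : s ^ (3/2 : ℝ) * (1 + ‖x‖ ^ 2) ^ (-n₂) ≤ (2:ℝ) ^ n₃ * A ^ (-n₃) := by
        have step1 : s ^ (3/2 : ℝ) * (1 + ‖x‖ ^ 2) ^ (-n₂)
            ≤ s ^ n₃ * (1 + ‖x‖ ^ 2) ^ (-n₃) := by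
          have a1 : s ^ (3/2 : ℝ) ≤ s ^ n₃ :=
            Real.rpow_le_rpow_of_exponent_le hs1 (by linarith)
          have a2 : (1 + ‖x‖ ^ 2) ^ (-n₂) ≤ (1 + ‖x‖ ^ 2) ^ (-n₃) := by
            apply Real.rpow_le_rpow_of_exponent_le hX1
            have : n₃ ≤ n₂ := min_le_right _ _
            linarith
          have b1 : (0:ℝ) ≤ s ^ (3/2 : ℝ) := by positivity
          have b2 : (0:ℝ) ≤ (1 + ‖x‖ ^ 2) ^ (-n₃) := by positivity
          calc s ^ (3/2 : ℝ) * (1 + ‖x‖ ^ 2) ^ (-n₂)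
              ≤ s ^ (3/2 : ℝ) * (1 + ‖x‖ ^ 2) ^ (-n₃) := mul_le_mul_of_nonneg_left a2 b1
            _ ≤ s ^ n₃ * (1 + ‖x‖ ^ 2) ^ (-n₃) := mul_le_mul_of_nonneg_right a1 b2
        have step2 : s ^ n₃ * (1 + ‖x‖ ^ 2) ^ (-n₃) = (s / (1 + ‖x‖ ^ 2)) ^ n₃ := by
          rw [Real.div_rpow hs0.le hX0.le, Real.rpow_neg hX0.le, div_eq_mul_inv]
        have hratio : s / (1 + ‖x‖ ^ 2) ≤ 2 / A := by
          rw [div_le_div_iff₀ hX0 hA0]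
          have hAs : A * s = s + ‖x‖ ^ 2 := by
            simp only [hA]
            field_simp
          nlinarith
        have step3 : (s / (1 + ‖x‖ ^ 2)) ^ n₃ ≤ (2 / A) ^ n₃ :=
          Real.rpow_le_rpow (by positivity) hratio (by linarith)
        have step4 : (2 / A) ^ n₃ = (2:ℝ) ^ n₃ * A ^ (-n₃) := by
          rw [Real.div_rpow (by norm_num) hA0.le, Real.rpow_neg hA0.le, div_eq_mul_inv]
        calc s ^ (3/2 : ℝ) * (1 + ‖x‖ ^ 2) ^ (-n₂)
            ≤ s ^ n₃ * (1 + ‖x‖ ^ 2) ^ (-n₃) := step1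
          _ = (s / (1 + ‖x‖ ^ 2)) ^ n₃ := step2
          _ ≤ (2 / A) ^ n₃ := step3
          _ = (2:ℝ) ^ n₃ * A ^ (-n₃) := step4
      have hK1nn := hK₁nn
      calc c * (s ^ (3/2 : ℝ) * K₁)
          = (4:ℝ) ^ n₂ * K₁ * (s ^ (3/2 : ℝ) * (1 + ‖x‖ ^ 2) ^ (-n₂)) := by
            rw [hc]; ring
        _ ≤ (4:ℝ) ^ n₂ * K₁ * ((2:ℝ) ^ n₃ * A ^ (-n₃)) := by
            exact mul_le_mul_of_nonneg_left key (mul_nonneg (by positivity) hK₁nn)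
        _ = (2 : ℝ) ^ n₃ * (4 : ℝ) ^ n₂ * K₁ * A ^ (-n₃) := by ring
    -- combine
    rw [hsplit]
    have hsum : ((4 : ℝ) ^ n₁ * A ^ (-n₃) * K₂)
        + ((2 : ℝ) ^ n₃ * (4 : ℝ) ^ n₂ * K₁ * A ^ (-n₃))
        ≤ ((2 : ℝ) ^ n₃ * K₂ + (4 : ℝ) ^ n₁ * K₂ + (2 : ℝ) ^ n₃ * (4 : ℝ) ^ n₂ * K₁ + 1)
          * A ^ (-n₃) := by
      have h0 : (0:ℝ) ≤ (2 : ℝ) ^ n₃ * K₂ + 1 :=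
        add_nonneg (mul_nonneg (Real.rpow_nonneg (by norm_num) _) hK₂nn) zero_le_one
      have hEq : ((2 : ℝ) ^ n₃ * K₂ + (4 : ℝ) ^ n₁ * K₂ + (2 : ℝ) ^ n₃ * (4 : ℝ) ^ n₂ * K₁ + 1)
          * A ^ (-n₃)
          = (((4 : ℝ) ^ n₁ * A ^ (-n₃) * K₂)
            + ((2 : ℝ) ^ n₃ * (4 : ℝ) ^ n₂ * K₁ * A ^ (-n₃)))
            + ((2 : ℝ) ^ n₃ * K₂ + 1) * A ^ (-n₃) := by ring
      rw [hEq]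
      exact le_add_of_nonneg_right (mul_nonneg h0 hAneg.le)
    calc (∫ y in S, (1 + ‖x - y‖ ^ 2 / s) ^ (-n₁) * (1 + ‖y‖ ^ 2) ^ (-n₂))
          + (∫ y in Sᶜ, (1 + ‖x - y‖ ^ 2 / s) ^ (-n₁) * (1 + ‖y‖ ^ 2) ^ (-n₂))
        ≤ ((4 : ℝ) ^ n₁ * A ^ (-n₃) * K₂)
          + ((2 : ℝ) ^ n₃ * (4 : ℝ) ^ n₂ * K₁ * A ^ (-n₃)) := add_le_add hIS hISc
      _ ≤ ((2 : ℝ) ^ n₃ * K₂ + (4 : ℝ) ^ n₁ * K₂ + (2 : ℝ) ^ n₃ * (4 : ℝ) ^ n₂ * K₁ + 1)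
          * A ^ (-n₃) := hsum
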